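/- Let E and E' be nontrivial finite-dimensional complex inner product spaces, let T : E → E and T' : E' → E' be symmetric positive-semidefinite linear operators, and let λ_1 ≤ λ_2 ≤ ... ≤ λ_{dim E} and λ'_1 ≤ λ'_2 ≤ ... ≤ λ'_{dim E'} denote their eigenvalues listed in ascending order with multiplicity. Let n_1, n_2 ∈ ℕ, let δ_1, δ_2 ≥ 0, and let Φ : E → E' be a linear map such that for every u ∈ E: (i) ‖u‖² ≤ ‖Φu‖² + δ_1(‖u‖² + Re⟨T^{n_1} u, u⟩) and (ii) Re⟨T'(Φu), Φu⟩ ≤ Re⟨T u, u⟩ + δ_2(‖u‖² + Re⟨T^{n_2} u, u⟩). Then for every k with 1 ≤ k ≤ min(dim E, dim E') such that 1 − (1 + λ_k^{n_1})δ_1 > 0, one has λ'_k ≤ λ_k + (λ_k(1 + λ_k^{n_1})δ_1 + (1 + λ_k^{n_2})δ_2)/(1 − (1 + λ_k^{n_1})δ_1). -/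

import Mathlib

open Finset in
private lemma aux_inner_eq {E : Type*} [NormedAddCommGroup E] [InnerProductSpace ℂ E]
    [FiniteDimensional ℂ E]
    (b : OrthonormalBasis (Fin (Module.finrank ℂ E)) ℂ E) (v w : E) :
    (inner ℂ v w : ℂ) = ∑ i, (starRingEnd ℂ) (b.repr v i) * b.repr w i := by
  rw [← b.repr.inner_map_map v w, PiLp.inner_apply]
  simp [RCLike.inner_apply]
  exact Finset.sum_congr rfl fun _ _ => mul_comm _ _

private lemma aux_norm_sq {E : Type*} [NormedAddCommGroup E] [InnerProductSpace ℂ E]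
    [FiniteDimensional ℂ E]
    (b : OrthonormalBasis (Fin (Module.finrank ℂ E)) ℂ E) (v : E) :
    ‖v‖ ^ 2 = ∑ i, ‖b.repr v i‖ ^ 2 := by
  rw [← b.repr.norm_map v, EuclideanSpace.norm_eq, Real.sq_sqrt]
  positivity

private lemma aux_quad {E : Type*} [NormedAddCommGroup E] [InnerProductSpace ℂ E]
    [FiniteDimensional ℂ E]
    (b : OrthonormalBasis (Fin (Module.finrank ℂ E)) ℂ E)
    (S : E →ₗ[ℂ] E) (hS : S.IsSymmetric) (μ : Fin (Module.finrank ℂ E) → ℝ)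
    (hμ : ∀ i, S (b i) = (μ i : ℂ) • b i) (v : E) :
    (inner ℂ (S v) v : ℂ).re = ∑ i, μ i * ‖b.repr v i‖ ^ 2 := by
  have hcoord : ∀ i, b.repr (S v) i = (μ i : ℂ) * b.repr v i := by
    intro i
    rw [b.repr_apply_apply, ← hS (b i) v, hμ, inner_smul_left, Complex.conj_ofReal,
      b.repr_apply_apply]
  rw [aux_inner_eq b, Complex.re_sum]
  refine Finset.sum_congr rfl fun i _ => ?_
  rw [hcoord i, map_mul, Complex.conj_ofReal, mul_assoc, RCLike.conj_mul]
  simp [← Complex.ofReal_pow, ← Complex.ofReal_mul]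

set_option maxHeartbeats 1000000 in
theorem stmt_17
    {E E' : Type*}
    [NormedAddCommGroup E] [InnerProductSpace ℂ E] [FiniteDimensional ℂ E] [Nontrivial E]
    [NormedAddCommGroup E'] [InnerProductSpace ℂ E'] [FiniteDimensional ℂ E'] [Nontrivial E']
    (T : E →ₗ[ℂ] E) (T' : E' →ₗ[ℂ] E')
    (hTsym : T.IsSymmetric) (hT'sym : T'.IsSymmetric)
    (hTpos : ∀ u : E, 0 ≤ (inner ℂ (T u) u : ℂ).re)
    (hT'pos : ∀ u : E', 0 ≤ (inner ℂ (T' u) u : ℂ).re)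
    (lam : Fin (Module.finrank ℂ E) → ℝ) (lam' : Fin (Module.finrank ℂ E') → ℝ)
    (hlam : Monotone lam) (hlam' : Monotone lam')
    (b : OrthonormalBasis (Fin (Module.finrank ℂ E)) ℂ E)
    (b' : OrthonormalBasis (Fin (Module.finrank ℂ E')) ℂ E')
    (hb : ∀ i, T (b i) = (lam i : ℂ) • b i)
    (hb' : ∀ i, T' (b' i) = (lam' i : ℂ) • b' i)
    (n1 n2 : ℕ) (δ1 δ2 : ℝ) (hδ1 : 0 ≤ δ1) (hδ2 : 0 ≤ δ2)
    (Φ : E →ₗ[ℂ] E')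
    (h1 : ∀ u : E, ‖u‖ ^ 2 ≤ ‖Φ u‖ ^ 2 +
      δ1 * (‖u‖ ^ 2 + (inner ℂ ((T ^ n1) u) u : ℂ).re))
    (h2 : ∀ u : E, (inner ℂ (T' (Φ u)) (Φ u) : ℂ).re ≤ (inner ℂ (T u) u : ℂ).re +
      δ2 * (‖u‖ ^ 2 + (inner ℂ ((T ^ n2) u) u : ℂ).re)) :
    ∀ (k : ℕ) (hk : k < Module.finrank ℂ E) (hk' : k < Module.finrank ℂ E'),
      0 < 1 - (1 + lam ⟨k, hk⟩ ^ n1) * δ1 →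
      lam' ⟨k, hk'⟩ ≤ lam ⟨k, hk⟩ +
        (lam ⟨k, hk⟩ * (1 + lam ⟨k, hk⟩ ^ n1) * δ1 + (1 + lam ⟨k, hk⟩ ^ n2) * δ2) /
          (1 - (1 + lam ⟨k, hk⟩ ^ n1) * δ1) := by
  intro k hk hk' hpos
  set L := lam ⟨k, hk⟩ with hL
  set L' := lam' ⟨k, hk'⟩ with hL'
  -- eigenvalues are nonnegative
  have hone : ∀ i, (inner ℂ (b i) (b i) : ℂ) = 1 := by
    intro i
    rw [inner_self_eq_norm_sq_to_K, b.orthonormal.1 i]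
    norm_num
  have hone' : ∀ i, (inner ℂ (b' i) (b' i) : ℂ) = 1 := by
    intro i
    rw [inner_self_eq_norm_sq_to_K, b'.orthonormal.1 i]
    norm_num
  have hlam0 : ∀ i, 0 ≤ lam i := by
    intro i
    have h := hTpos (b i)
    rw [hb i, inner_smul_left, hone i, mul_one, Complex.conj_ofReal] at h
    simpa using h
  have hlam'0 : ∀ i, 0 ≤ lam' i := by
    intro i
    have h := hT'pos (b' i)
    rw [hb' i, inner_smul_left, hone' i, mul_one, Complex.conj_ofReal] at h
    simpa using h
  -- eigenvectors of powers
  have hbn : ∀ (n : ℕ) (i), (T ^ n) (b i) = ((lam i ^ n : ℝ) : ℂ) • b i := by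
    intro n
    induction n with
    | zero => intro i; simp
    | succ n ih =>
      intro i
      rw [pow_succ']
      simp only [Module.End.mul_apply, hb i, map_smul, ih i, smul_smul]
      rw [pow_succ]
      push_cast
      ring_nf
  -- the extension-by-zero map
  let ext : (Fin (k + 1) → ℂ) →ₗ[ℂ] EuclideanSpace ℂ (Fin (Module.finrank ℂ E)) :=
    { toFun := fun c => WithLp.toLp 2 (fun i => if h : (i : ℕ) < k + 1 then c ⟨i, h⟩ else 0)
      map_add' := by
        intro c d
        ext i
        by_cases h : (i : ℕ) ≤ k <;>
          simp [h]
      map_smul' := by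
        intro a c
        ext i
        by_cases h : (i : ℕ) ≤ k <;>
          simp [h] }
  have hext : ∀ (c : Fin (k + 1) → ℂ) (i : Fin (Module.finrank ℂ E)),
      ext c i = if h : (i : ℕ) < k + 1 then c ⟨i, h⟩ else 0 := fun _ _ => rfl
  -- the test map into k coordinates
  let A : (Fin (k + 1) → ℂ) →ₗ[ℂ] (Fin k → ℂ) :=
    LinearMap.pi fun j : Fin k =>
      ((innerSL ℂ (b' (Fin.castLE hk'.le j)) : E' →ₗ[ℂ] ℂ) ∘ₗ Φ ∘ₗ
        (b.repr.symm.toLinearEquiv : EuclideanSpace ℂ (Fin (Module.finrank ℂ E)) ≃ₗ[ℂ] E).toLinearMap ∘ₗ ext)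
  have hAker : LinearMap.ker A ≠ ⊥ := by
    apply LinearMap.ker_ne_bot_of_finrank_lt
    simp only [Module.finrank_pi, Fintype.card_fin, Module.finrank_self]
    omega
  obtain ⟨c, hcmem, hc0⟩ := (Submodule.ne_bot_iff _).mp hAker
  set cf : EuclideanSpace ℂ (Fin (Module.finrank ℂ E)) := ext c with hcf
  set u : E := b.repr.symm cf with hu
  have hrepr : ∀ i, b.repr u i = cf i := by
    intro i
    rw [hu, b.repr.apply_symm_apply]
  -- kernel condition
  have hker : ∀ j : Fin k, (inner ℂ (b' (Fin.castLE hk'.le j)) (Φ u) : ℂ) = 0 := by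
    intro j
    have h0 : A c = 0 := hcmem
    have := congrFun h0 j
    simpa [A, LinearMap.pi_apply, hu, hcf] using this
  -- c nonzero gives cf nonzero
  have hcf0 : ∃ i, cf i ≠ 0 := by
    by_contra h
    push_neg at h
    apply hc0
    funext j
    have hh := h (Fin.castLE (by omega : k + 1 ≤ Module.finrank ℂ E) j)
    rw [hcf, hext] at hh
    rw [dif_pos (show ((Fin.castLE (by omega : k + 1 ≤ Module.finrank ℂ E) j : Fin _) : ℕ) < k + 1 from j.isLt)] at hh
    simpa using hh
  have hcf_zero : ∀ i : Fin (Module.finrank ℂ E), ¬ ((i : ℕ) < k + 1) → cf i = 0 := by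
    intro i h
    rw [hcf, hext, dif_neg h]
  -- norms
  set r : ℝ := ∑ i, ‖cf i‖ ^ 2 with hr
  have hur : ‖u‖ ^ 2 = r := by
    rw [aux_norm_sq b u]
    exact Finset.sum_congr rfl fun i _ => by rw [hrepr i]
  have hrpos : 0 < r := by
    obtain ⟨i, hi⟩ := hcf0
    have hn : 0 < ‖cf i‖ := norm_pos_iff.mpr hi
    have h1' : (0:ℝ) < ‖cf i‖ ^ 2 := by positivity
    refine Finset.sum_pos' (fun j _ => by positivity) ⟨i, Finset.mem_univ i, h1'⟩
  -- quadratic form bounds on u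
  have hTn : ∀ n : ℕ, (inner ℂ ((T ^ n) u) u : ℂ).re ≤ L ^ n * r := by
    intro n
    rw [aux_quad b (T ^ n) (hTsym.pow n) (fun i => lam i ^ n) (fun i => hbn n i) u]
    have : ∀ i : Fin (Module.finrank ℂ E), lam i ^ n * ‖b.repr u i‖ ^ 2 ≤ L ^ n * ‖cf i‖ ^ 2 := by
      intro i
      rw [hrepr i]
      by_cases h : (i : ℕ) < k + 1
      · have hle : lam i ≤ L := hlam (by simp only [Fin.le_def]; omega)
        have := pow_le_pow_left₀ (hlam0 i) hle n
        nlinarith [sq_nonneg ‖cf i‖]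
      · rw [hcf_zero i h]
        simp
    calc ∑ i, lam i ^ n * ‖b.repr u i‖ ^ 2 ≤ ∑ i, L ^ n * ‖cf i‖ ^ 2 :=
          Finset.sum_le_sum fun i _ => this i
      _ = L ^ n * r := by rw [hr, Finset.mul_sum]
  have hT1 : (inner ℂ (T u) u : ℂ).re ≤ L * r := by
    have := hTn 1
    simpa using this
  -- quadratic form lower bound on Φ u
  set s : ℝ := ‖Φ u‖ ^ 2 with hs
  have hs_sum : s = ∑ j, ‖b'.repr (Φ u) j‖ ^ 2 := aux_norm_sq b' (Φ u)
  have hdzero : ∀ j : Fin (Module.finrank ℂ E'), (j : ℕ) < k → b'.repr (Φ u) j = 0 := by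
    intro j hj
    have hje : Fin.castLE hk'.le (⟨(j : ℕ), hj⟩ : Fin k) = j := Fin.ext rfl
    rw [b'.repr_apply_apply, ← hje]
    exact hker ⟨(j : ℕ), hj⟩
  have hlow : L' * s ≤ (inner ℂ (T' (Φ u)) (Φ u) : ℂ).re := by
    rw [aux_quad b' T' hT'sym lam' hb' (Φ u), hs_sum, Finset.mul_sum]
    refine Finset.sum_le_sum fun j _ => ?_
    by_cases h : (j : ℕ) < k
    · rw [hdzero j h]
      simp
    · have : L' ≤ lam' j := hlam' (by simp only [Fin.le_def]; omega)
      nlinarith [sq_nonneg ‖b'.repr (Φ u) j‖]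
  -- combine
  have f1 : r ≤ s + δ1 * (r + L ^ n1 * r) := by
    have := h1 u
    rw [hur] at this
    nlinarith [hTn n1]
  have f3 : (inner ℂ (T' (Φ u)) (Φ u) : ℂ).re ≤ L * r + δ2 * (r + L ^ n2 * r) := by
    have := h2 u
    rw [hur] at this
    nlinarith [hTn n2, hT1]
  have hL'0 : 0 ≤ L' := hlam'0 _
  have hs1 : (1 - (1 + L ^ n1) * δ1) * r ≤ s := by nlinarith
  have hchain : (L' * (1 - (1 + L ^ n1) * δ1)) * r ≤ (L + (1 + L ^ n2) * δ2) * r := by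
    have h2' : L' * ((1 - (1 + L ^ n1) * δ1) * r) ≤ L' * s :=
      mul_le_mul_of_nonneg_left hs1 hL'0
    nlinarith [hlow.trans f3]
  have key : L' * (1 - (1 + L ^ n1) * δ1) ≤ L + (1 + L ^ n2) * δ2 :=
    le_of_mul_le_mul_right hchain hrpos
  have heq : L + (L * (1 + L ^ n1) * δ1 + (1 + L ^ n2) * δ2) / (1 - (1 + L ^ n1) * δ1)
      = (L + (1 + L ^ n2) * δ2) / (1 - (1 + L ^ n1) * δ1) := by
    field_simp
    ring
  rw [heq, le_div_iff₀ hpos]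
  linarith [key]
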